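/- Let p_1,…,p_k be independent random variables each uniformly distributed on [0,1], and let p_{(1)} ≤ ⋯ ≤ p_{(k)} denote their order statistics. Then the Simes statistic S = min_{1≤j≤k} (k/j)·p_{(j)} satisfies ℙ(S ≤ α) = α for every α ∈ [0,1]. -/

import Mathlib

open MeasureTheory ProbabilityTheory Set Finset Pointwise

namespace SimesAux

/-- number of coordinates `≤ c` -/
noncomputable def cnt {k : ℕ} (x : Fin k → ℝ) (c : ℝ) : ℕ := ∑ i, if x i ≤ c then 1 else 0

lemma cnt_eq_card {k : ℕ} (x : Fin k → ℝ) (c : ℝ) :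
    cnt x c = Fintype.card {i // x i ≤ c} := by
  rw [Fintype.card_subtype, Finset.card_filter, cnt]

lemma cnt_le {k : ℕ} (x : Fin k → ℝ) (c : ℝ) : cnt x c ≤ k := by
  calc cnt x c ≤ ∑ _i : Fin k, 1 := Finset.sum_le_sum (fun i _ => by split <;> simp)
  _ = k := by simp

lemma measurable_cnt {k : ℕ} (c : ℝ) : Measurable (fun x : Fin k → ℝ => cnt x c) := by
  apply Finset.measurable_sum
  intro i _
  have : Measurable fun x : Fin k → ℝ => x i := measurable_pi_apply i
  exact Measurable.ite (measurableSet_le this measurable_const) measurable_const measurable_const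

lemma cnt_comp_perm {k : ℕ} (x : Fin k → ℝ) (σ : Equiv.Perm (Fin k)) (c : ℝ) :
    cnt (x ∘ σ) c = cnt x c := by
  rw [cnt, cnt]
  exact Fintype.sum_equiv σ _ _ (fun i => rfl)

lemma cnt_snoc {n : ℕ} (y : Fin n → ℝ) (u : ℝ) (c : ℝ) :
    cnt (Fin.snoc y u) c = cnt y c + if u ≤ c then 1 else 0 := by
  rw [cnt, Fin.sum_univ_castSucc]
  simp [cnt]

lemma cnt_congr {k : ℕ} {x x' : Fin k → ℝ} {c c' : ℝ}
    (h : ∀ i, x i ≤ c ↔ x' i ≤ c') : cnt x c = cnt x' c' := by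
  unfold cnt
  exact Finset.sum_congr rfl fun i _ => by
    by_cases hi : x i ≤ c
    · rw [if_pos hi, if_pos ((h i).mp hi)]
    · rw [if_neg hi, if_neg (fun hc => hi ((h i).mpr hc))]

/-- the "good"/complement set: all coordinates in `[0,1]` and
`#{i : x i ≤ β (j+1)} ≤ j` for every `j`. -/
def G (k : ℕ) (β : ℝ) : Set (Fin k → ℝ) :=
  {x | (∀ i, x i ∈ Set.Icc (0:ℝ) 1) ∧ ∀ j : Fin k, cnt x (β * ((j:ℕ)+1)) ≤ (j:ℕ)}

lemma measurableSet_G (k : ℕ) (β : ℝ) : MeasurableSet (G k β) := by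
  unfold G
  rw [Set.setOf_and, Set.setOf_forall, Set.setOf_forall]
  apply MeasurableSet.inter
  · exact MeasurableSet.iInter fun i =>
      (measurable_pi_apply i) measurableSet_Icc
  · exact MeasurableSet.iInter fun j =>
      (measurable_cnt _) (measurableSet_Iic (α := ℕ))

lemma G_perm {k : ℕ} (β : ℝ) (x : Fin k → ℝ) (σ : Equiv.Perm (Fin k)) :
    x ∘ σ ∈ G k β ↔ x ∈ G k β := by
  constructor <;> intro h
  · exact ⟨fun i => by simpa using h.1 (σ.symm i), fun j => by
      simpa [cnt_comp_perm] using h.2 j⟩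
  · exact ⟨fun i => h.1 (σ i), fun j => by simpa [cnt_comp_perm] using h.2 j⟩

/-- strict max at coordinate `i` -/
def M {k : ℕ} (i : Fin k) : Set (Fin k → ℝ) := {x | ∀ l, l ≠ i → x l < x i}

lemma measurableSet_M {k : ℕ} (i : Fin k) : MeasurableSet (M i) := by
  have : M i = ⋂ l, ⋂ (_ : l ≠ i), {x : Fin k → ℝ | x l < x i} := by
    ext x; simp [M]
  rw [this]
  exact MeasurableSet.iInter fun l => MeasurableSet.iInter fun _ =>
    measurableSet_lt (measurable_pi_apply l) (measurable_pi_apply i)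

/-- ties are null -/
lemma pair_null {n : ℕ} (i l : Fin (n+1)) (h : l ≠ i) :
    volume {x : Fin (n+1) → ℝ | x l = x i} = 0 := by
  obtain ⟨m, hm⟩ := Fin.exists_succAbove_eq h
  have hmp := measurePreserving_piFinSuccAbove (fun _ : Fin (n+1) => (volume : Measure ℝ)) i
  have hA : MeasurableSet {q : ℝ × (Fin n → ℝ) | q.2 m = q.1} :=
    measurableSet_eq_fun (by fun_prop) (by fun_prop)
  have hset : {x : Fin (n+1) → ℝ | x l = x i}
      = (MeasurableEquiv.piFinSuccAbove (fun _ => ℝ) i) ⁻¹' {q | q.2 m = q.1} := by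
    ext x
    simp only [Set.mem_setOf_eq, Set.mem_preimage, MeasurableEquiv.piFinSuccAbove]
    rw [← hm]
    rfl
  rw [hset]
  have := hmp.measure_preimage (s := {q | q.2 m = q.1})
  rw [show (volume : Measure (Fin (n+1) → ℝ)) = Measure.pi (fun _ => volume) from volume_pi]
  rw [this hA.nullMeasurableSet]
  rw [Measure.prod_apply hA]
  have hz : ∀ u : ℝ, (Measure.pi fun _ : Fin n => (volume : Measure ℝ))
      {a : Fin n → ℝ | a m = u} = 0 :=
    fun u => Measure.pi_hyperplane (fun _ : Fin n => (volume : Measure ℝ)) m u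
  simp [hz]

/-- decomposition of a measurable set into pieces by strict-max coordinate -/
lemma vol_decomp {n : ℕ} (S : Set (Fin (n+1) → ℝ)) (hS : MeasurableSet S) :
    volume S = ∑ i : Fin (n+1), volume (S ∩ M i) := by
  classical
  have hdisj : Pairwise (Function.onFun Disjoint fun i => S ∩ M i) := by
    intro a b hab
    rw [Function.onFun, Set.disjoint_left]
    rintro x ⟨-, hxa⟩ ⟨-, hxb⟩
    exact absurd (lt_trans (hxa b (Ne.symm hab)) (hxb a hab)) (lt_irrefl _)
  have hmeas : ∀ i, MeasurableSet (S ∩ M i) := fun i => hS.inter (measurableSet_M i)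
  have hUnion : volume (⋃ i, S ∩ M i) = ∑ i : Fin (n+1), volume (S ∩ M i) := by
    rw [measure_iUnion hdisj hmeas, tsum_fintype]
  rw [← hUnion]
  refine le_antisymm ?_ (measure_mono (Set.iUnion_subset fun i => Set.inter_subset_left))
  set T : Set (Fin (n+1) → ℝ) := ⋃ (i : Fin (n+1)), ⋃ (l : Fin (n+1)), ⋃ (_ : l ≠ i),
    {x | x l = x i} with hT
  have hTnull : volume T = 0 := by
    rw [hT]
    refine measure_iUnion_null fun i => measure_iUnion_null fun l => measure_iUnion_null fun h =>
      pair_null i l h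
  have hsub : S ⊆ (⋃ i, S ∩ M i) ∪ T := by
    intro x hx
    obtain ⟨i, -, hi⟩ := Finset.exists_max_image Finset.univ x ⟨Fin.last n, Finset.mem_univ _⟩
    by_cases hxi : x ∈ M i
    · exact Or.inl (Set.mem_iUnion.mpr ⟨i, hx, hxi⟩)
    · right
      simp only [M, Set.mem_setOf_eq, not_forall] at hxi
      obtain ⟨l, hl, hnlt⟩ := hxi
      have : x l = x i := le_antisymm (hi l (Finset.mem_univ _)) (not_lt.mp hnlt)
      exact Set.mem_iUnion.mpr ⟨i, Set.mem_iUnion.mpr ⟨l, Set.mem_iUnion.mpr ⟨hl, this⟩⟩⟩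
  calc volume S ≤ volume ((⋃ i, S ∩ M i) ∪ T) := measure_mono hsub
    _ ≤ volume (⋃ i, S ∩ M i) + volume T := measure_union_le _ _
    _ = volume (⋃ i, S ∩ M i) := by rw [hTnull, add_zero]

/-- all max-pieces of `G` have the same volume -/
lemma vol_GM_eq {k : ℕ} (β : ℝ) (i j : Fin k) :
    volume (G k β ∩ M i) = volume (G k β ∩ M j) := by
  classical
  have hGmeas : MeasurableSet (G k β) := measurableSet_G k β
  set e : Fin k ≃ Fin k := Equiv.swap j i with he
  have hmp := MeasureTheory.volume_preserving_arrowCongr' (β₁ := ℝ) (β₂ := ℝ)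
    e (MeasurableEquiv.refl ℝ) (MeasurePreserving.id _)
  have hcoe : ∀ x : Fin k → ℝ,
      (MeasurableEquiv.arrowCongr' e (MeasurableEquiv.refl ℝ)) x = x ∘ e.symm := fun x => rfl
  have hpre : (MeasurableEquiv.arrowCongr' e (MeasurableEquiv.refl ℝ)) ⁻¹' (G k β ∩ M i)
      = G k β ∩ M j := by
    ext x
    simp only [Set.mem_preimage, hcoe, Set.mem_inter_iff]
    constructor
    · rintro ⟨hG, hM⟩
      refine ⟨(G_perm β x e.symm).mp hG, fun l hl => ?_⟩
      have := hM (e l) (by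
        simp only [he, ne_eq]
        intro hcon
        apply hl
        have := congrArg e.symm hcon
        simpa [he, Equiv.symm_apply_apply, Equiv.swap_apply_right] using this)
      simpa [he, Function.comp, Equiv.symm_apply_apply, Equiv.swap_apply_right,
        Equiv.symm_swap] using this
    · rintro ⟨hG, hM⟩
      refine ⟨(G_perm β x e.symm).mpr hG, fun l hl => ?_⟩
      simp only [Function.comp_apply, he, Equiv.symm_swap]
      rw [Equiv.swap_apply_right]
      apply hM
      intro hcon
      apply hl
      have := congrArg (Equiv.swap j i) hcon
      simpa [Equiv.swap_apply_left] using this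
  calc volume (G k β ∩ M i)
      = volume ((MeasurableEquiv.arrowCongr' e (MeasurableEquiv.refl ℝ)) ⁻¹' (G k β ∩ M i)) := by
        rw [hmp.measure_preimage ((hGmeas.inter (measurableSet_M i)).nullMeasurableSet)]
    _ = volume (G k β ∩ M j) := by rw [hpre]

/-- slice set -/
def Sl (n : ℕ) (β u : ℝ) : Set (Fin n → ℝ) :=
  {y | (∀ m, y m ∈ Set.Ico 0 u) ∧ ∀ j : Fin n, cnt y (β * ((j:ℕ)+1)) ≤ (j:ℕ)}

lemma vol_slice (n : ℕ) (β u : ℝ) (hβ : 0 ≤ β) (hu : β*((n:ℝ)+1) < u) :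
    volume (Sl n β u) = ENNReal.ofReal (u^n) * volume (G n (β/u)) := by
  have hu0 : (0:ℝ) < u := lt_of_le_of_lt (by positivity) hu
  have hD : u • G n (β/u)
      = {y : Fin n → ℝ | (∀ m, y m ∈ Set.Icc 0 u) ∧ ∀ j : Fin n, cnt y (β*((j:ℕ)+1)) ≤ (j:ℕ)} := by
    ext y
    rw [Set.mem_smul_set_iff_inv_smul_mem₀ (ne_of_gt hu0)]
    simp only [G, Set.mem_setOf_eq, Pi.smul_apply, smul_eq_mul, Set.mem_Icc]
    have hmem : ∀ v : ℝ, (0 ≤ u⁻¹ * v ∧ u⁻¹ * v ≤ 1) ↔ (0 ≤ v ∧ v ≤ u) := by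
      intro v
      rw [inv_mul_eq_div, div_le_one hu0, le_div_iff₀ hu0, zero_mul]
    have hcnt : ∀ j : Fin n, cnt (u⁻¹ • y) ((β/u) * ((j:ℕ)+1))
        = cnt y (β*((j:ℕ)+1)) := by
      intro j
      refine cnt_congr fun i => ?_
      show u⁻¹ * y i ≤ _ ↔ _
      rw [inv_mul_eq_div, div_mul_eq_mul_div, div_le_div_iff_of_pos_right hu0]
    constructor
    · rintro ⟨h1, h2⟩
      exact ⟨fun m => (hmem (y m)).mp (h1 m), fun j => by rw [← hcnt j]; exact h2 j⟩
    · rintro ⟨h1, h2⟩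
      exact ⟨fun m => (hmem (y m)).mpr (h1 m), fun j => by rw [hcnt j]; exact h2 j⟩
  have hvol : volume (Sl n β u) = volume (u • G n (β/u)) := by
    refine le_antisymm (measure_mono ?_) ?_
    · rw [hD]
      rintro y ⟨h1, h2⟩
      exact ⟨fun m => ⟨(h1 m).1, le_of_lt (h1 m).2⟩, h2⟩
    · have hdiff : (u • G n (β/u)) \ Sl n β u ⊆ ⋃ m : Fin n, {y : Fin n → ℝ | y m = u} := by
        rw [hD]
        rintro y ⟨⟨h1, h2⟩, hns⟩
        simp only [Sl, Set.mem_setOf_eq, not_and, not_forall] at hns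
        by_cases hall : ∀ m, y m ∈ Set.Ico 0 u
        · exact absurd (hns hall) (by push_neg; exact fun j => h2 j)
        · push_neg at hall
          obtain ⟨m, hm⟩ := hall
          rw [Set.mem_Ico] at hm
          push_neg at hm
          exact Set.mem_iUnion.mpr ⟨m, le_antisymm ((h1 m).2) (hm ((h1 m).1))⟩
      have hnull : volume (⋃ m : Fin n, {y : Fin n → ℝ | y m = u}) = 0 :=
        measure_iUnion_null fun m => by
          rw [MeasureTheory.volume_pi]
          exact Measure.pi_hyperplane (fun _ : Fin n => (volume : Measure ℝ)) m u
      calc volume (u • G n (β/u)) ≤ volume (Sl n β u ∪ ((u • G n (β/u)) \ Sl n β u)) :=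
            measure_mono (fun y hy => by
              by_cases h : y ∈ Sl n β u
              · exact Or.inl h
              · exact Or.inr ⟨hy, h⟩)
        _ ≤ volume (Sl n β u) + volume ((u • G n (β/u)) \ Sl n β u) := measure_union_le _ _
        _ ≤ volume (Sl n β u) + 0 :=
            add_le_add le_rfl (le_trans (measure_mono hdiff) (le_of_eq hnull))
        _ = volume (Sl n β u) := add_zero _
  rw [hvol, Measure.addHaar_smul_of_nonneg volume (le_of_lt hu0),
    Module.finrank_fintype_fun_eq_card, Fintype.card_fin]

/-- Fubini on the last (max) coordinate -/
lemma vol_GM_last (n : ℕ) (β : ℝ) (hβ : 0 ≤ β) :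
    volume (G (n+1) β ∩ M (Fin.last n)) =
      ∫⁻ u in Set.Ioc (β*((n:ℝ)+1)) 1, volume (Sl n β u) := by
  classical
  set a : ℝ := β*((n:ℝ)+1) with ha
  set e := MeasurableEquiv.piFinSuccAbove (fun _ : Fin (n+1) => ℝ) (Fin.last n) with he
  have hmp := measurePreserving_piFinSuccAbove (fun _ : Fin (n+1) => (volume : Measure ℝ))
    (Fin.last n)
  set A : Set (ℝ × (Fin n → ℝ)) := {q | q.1 ∈ Set.Ioc a 1 ∧ q.2 ∈ Sl n β q.1} with hA
  have hSlmeas : MeasurableSet {q : ℝ × (Fin n → ℝ) | q.2 ∈ Sl n β q.1} := by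
    unfold Sl
    simp only [Set.mem_setOf_eq, Set.mem_Ico]
    rw [Set.setOf_and, Set.setOf_forall]
    refine MeasurableSet.inter (MeasurableSet.iInter fun m => ?_) ?_
    · rw [Set.setOf_and]
      refine MeasurableSet.inter ?_ ?_
      · exact measurableSet_le measurable_const (by fun_prop)
      · exact measurableSet_lt (by fun_prop) measurable_fst
    · rw [Set.setOf_forall]
      exact MeasurableSet.iInter fun j =>
        measurableSet_le ((measurable_cnt _).comp measurable_snd) measurable_const
  have hAmeas : MeasurableSet A :=
    (measurable_fst measurableSet_Ioc).inter hSlmeas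
  have hset : G (n+1) β ∩ M (Fin.last n) = e ⁻¹' A := by
    ext x
    have hex : e x = (x (Fin.last n), fun j : Fin n => x ((Fin.last n).succAbove j)) := rfl
    have hsucc : ∀ j : Fin n, (Fin.last n).succAbove j = j.castSucc :=
      fun j => Fin.succAbove_last_apply j
    have hxsnoc : x = Fin.snoc (fun j : Fin n => x j.castSucc) (x (Fin.last n)) := by
      funext l
      refine Fin.lastCases ?_ (fun m => ?_) l
      · rw [Fin.snoc_last]
      · rw [Fin.snoc_castSucc]
    constructor
    · rintro ⟨⟨hbox, hcnt⟩, hM⟩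
      simp only [Set.mem_preimage, hA, Set.mem_setOf_eq, hex, hsucc]
      have hylt : ∀ m : Fin n, x m.castSucc < x (Fin.last n) :=
        fun m => hM m.castSucc (Fin.ne_last_of_lt (Fin.castSucc_lt_last m))
      have hkey : a < x (Fin.last n) := by
        by_contra hcon
        push_neg at hcon
        have hall : ∀ l, x l ≤ a := by
          intro l
          refine Fin.lastCases hcon (fun m => le_trans (le_of_lt (hylt m)) hcon) l
        have hcnt_full : cnt x a = n + 1 := by
          unfold cnt
          rw [Finset.sum_congr rfl (fun i _ => if_pos (hall i))]
          simp
        have := hcnt (Fin.last n)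
        rw [Fin.val_last] at this
        rw [show β * ((n:ℕ)+1) = a by push_cast [ha]; ring] at this
        omega
      have hiflt : ∀ j : Fin n, β * ((j:ℕ)+1) < x (Fin.last n) := by
        intro j
        refine lt_of_le_of_lt ?_ hkey
        have hj1 : ((j:ℕ):ℝ) + 1 ≤ (n:ℝ) + 1 := by
          exact_mod_cast Nat.succ_le_succ (le_of_lt j.isLt)
        calc β * (((j:ℕ):ℝ)+1) ≤ β*((n:ℝ)+1) := mul_le_mul_of_nonneg_left hj1 hβ
          _ = a := ha.symm
      refine ⟨⟨hkey, (hbox (Fin.last n)).2⟩, fun m => ⟨(hbox m.castSucc).1, hylt m⟩, fun j => ?_⟩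
      have hc := hcnt j.castSucc
      rw [Fin.coe_castSucc] at hc
      rw [hxsnoc, cnt_snoc, if_neg (not_le.mpr (hiflt j))] at hc
      simpa using hc
    · intro hxA
      simp only [Set.mem_preimage, hA, Set.mem_setOf_eq, hex, hsucc] at hxA
      obtain ⟨⟨hua, hu1⟩, hyIco, hycnt⟩ := hxA
      have hu0 : 0 ≤ x (Fin.last n) := le_of_lt (lt_of_le_of_lt (by positivity) hua)
      have hiflt : ∀ j : Fin n, β * ((j:ℕ)+1) < x (Fin.last n) := by
        intro j
        refine lt_of_le_of_lt ?_ hua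
        rw [ha]
        have hj1 : ((j:ℕ):ℝ) + 1 ≤ (n:ℝ) + 1 := by
          exact_mod_cast Nat.succ_le_succ (le_of_lt j.isLt)
        exact mul_le_mul_of_nonneg_left hj1 hβ
      refine ⟨⟨fun i => ?_, fun j => ?_⟩, fun l hl => ?_⟩
      · refine Fin.lastCases ⟨hu0, hu1⟩ (fun m => ⟨(hyIco m).1,
          le_trans (le_of_lt (hyIco m).2) hu1⟩) i
      · refine Fin.lastCases ?_ (fun m => ?_) j
        · rw [Fin.val_last, hxsnoc, cnt_snoc]
          have hne : ¬ (x (Fin.last n) ≤ β * ((n:ℝ)+1)) := not_le.mpr (by rw [← ha]; exact hua)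
          rw [if_neg hne]
          simpa using cnt_le (fun j : Fin n => x j.castSucc) (β * ((n:ℝ)+1))
        · rw [Fin.coe_castSucc, hxsnoc, cnt_snoc, if_neg (not_le.mpr (hiflt m))]
          simpa using hycnt m
      · obtain ⟨m, rfl⟩ := Fin.exists_castSucc_eq.mpr hl
        exact (hyIco m).2
  rw [hset]
  have hvol : (volume : Measure (Fin (n+1) → ℝ)) (e ⁻¹' A)
      = ((volume : Measure ℝ).prod (volume : Measure (Fin n → ℝ))) A := by
    rw [show (volume : Measure (Fin (n+1) → ℝ)) = Measure.pi (fun _ => volume) from volume_pi]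
    rw [show (volume : Measure (Fin n → ℝ)) = Measure.pi (fun _ => volume) from volume_pi]
    exact hmp.measure_preimage hAmeas.nullMeasurableSet
  rw [hvol, Measure.prod_apply hAmeas]
  have : (fun u => (volume : Measure (Fin n → ℝ)) (Prod.mk u ⁻¹' A))
      = fun u => Set.indicator (Set.Ioc a 1) (fun u => volume (Sl n β u)) u := by
    funext u
    by_cases hu : u ∈ Set.Ioc a 1
    · rw [Set.indicator_of_mem hu]
      congr 1
      ext y
      simp only [Set.mem_preimage, hA, Set.mem_setOf_eq]
      exact ⟨fun h => h.2, fun h => ⟨hu, h⟩⟩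
    · rw [Set.indicator_of_notMem hu]
      have : (Prod.mk u ⁻¹' A) = ∅ := by
        ext y
        simp only [Set.mem_preimage, hA, Set.mem_setOf_eq, Set.mem_empty_iff_false, iff_false]
        exact fun h => hu h.1
      rw [this]
      simp
  rw [this, lintegral_indicator measurableSet_Ioc]

lemma real_integral_step (n : ℕ) (β a : ℝ) (ha : a = β*((n:ℝ)+1)) (haa : a ≤ 1) :
    ∫ u in a..1, (u^n - β*(n:ℝ)*u^(n-1)) = (1-a)/((n:ℝ)+1) := by
  rw [intervalIntegral.integral_sub (intervalIntegral.intervalIntegrable_pow n)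
      ((intervalIntegral.intervalIntegrable_pow (n-1)).const_mul _),
    intervalIntegral.integral_const_mul, integral_pow, integral_pow]
  cases n with
  | zero => norm_num
  | succ m =>
    have h1 : ((m:ℝ)+1) ≠ 0 := by positivity
    have h2 : ((m:ℝ)+1+1) ≠ 0 := by positivity
    have hmn : (m+1) - 1 = m := rfl
    rw [hmn]
    push_cast
    subst ha
    field_simp
    push_cast
    ring

lemma lintegral_step (n : ℕ) (β : ℝ) (hβ : 0 ≤ β) (hβk : β*((n:ℝ)+1) ≤ 1) :
    ∫⁻ u in Set.Ioc (β*((n:ℝ)+1)) 1, ENNReal.ofReal (u^n) * ENNReal.ofReal (1 - (β/u)*n)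
      = ENNReal.ofReal ((1 - β*((n:ℝ)+1))/((n:ℝ)+1)) := by
  set a : ℝ := β*((n:ℝ)+1) with ha
  have ha0 : 0 ≤ a := by positivity
  have key : ∀ u ∈ Set.Ioc a 1,
      ENNReal.ofReal (u^n) * ENNReal.ofReal (1 - (β/u)*n)
        = ENNReal.ofReal (u^n - β*(n:ℝ)*u^(n-1)) := by
    intro u hu
    have hu0 : 0 < u := lt_of_le_of_lt ha0 hu.1
    rw [← ENNReal.ofReal_mul (by positivity)]
    congr 1
    have hun : u^n * ((β/u)*(n:ℝ)) = β*(n:ℝ)*u^(n-1) := by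
      cases n with
      | zero => simp
      | succ m =>
        have : u^(m+1) = u^m * u := pow_succ u m
        rw [this]
        have hmn : (m+1) - 1 = m := rfl
        rw [hmn]
        field_simp
    rw [mul_sub, mul_one, hun]
  rw [setLIntegral_congr_fun measurableSet_Ioc key]
  have hg : Continuous fun u : ℝ => u^n - β*(n:ℝ)*u^(n-1) := by
    exact (continuous_pow n).sub (continuous_const.mul (continuous_pow (n-1)))
  have hnn : ∀ u ∈ Set.Ioc a 1, 0 ≤ u^n - β*(n:ℝ)*u^(n-1) := by
    intro u hu
    have hu0 : 0 < u := lt_of_le_of_lt ha0 hu.1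
    have hbn : β*(n:ℝ) ≤ u := by
      refine le_trans ?_ (le_of_lt hu.1)
      rw [ha]
      nlinarith
    cases n with
    | zero => simp
    | succ m =>
      have hmn : (m+1) - 1 = m := rfl
      rw [hmn, pow_succ]
      push_cast
      push_cast at hbn
      nlinarith [pow_nonneg (le_of_lt hu0) m]
  rw [← ofReal_integral_eq_lintegral_ofReal
      (hg.integrableOn_Ioc.mono_measure le_rfl |>.mono_set (subset_refl _))
      ((ae_restrict_iff' measurableSet_Ioc).mpr (Filter.Eventually.of_forall hnn))]
  congr 1
  rw [← intervalIntegral.integral_of_le hβk]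
  exact real_integral_step n β a ha hβk

/-- The main volume computation: `vol(G k β) = 1 - βk`. -/
lemma volG : ∀ (k : ℕ) (β : ℝ), 0 ≤ β → β * k ≤ 1 →
    volume (G k β) = ENNReal.ofReal (1 - β * k) := by
  intro k
  induction k with
  | zero =>
    intro β hβ hβk
    have hG : G 0 β = Set.univ := by
      ext x
      simp only [G, Set.mem_setOf_eq, Set.mem_univ, iff_true]
      exact ⟨fun i => i.elim0, fun j => j.elim0⟩
    rw [hG, MeasureTheory.volume_pi, Measure.pi_univ]
    simp
  | succ n IH =>
    intro β hβ hβk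
    have hcast : ((n+1 : ℕ) : ℝ) = (n:ℝ)+1 := by push_cast; ring
    have hβk' : β*((n:ℝ)+1) ≤ 1 := by rw [← hcast]; exact_mod_cast hβk
    rw [vol_decomp _ (measurableSet_G _ _)]
    rw [Finset.sum_congr rfl (fun i _ => vol_GM_eq β i (Fin.last n))]
    rw [Finset.sum_const, Finset.card_univ, Fintype.card_fin, nsmul_eq_mul]
    rw [vol_GM_last n β hβ]
    have hslice : ∀ u ∈ Set.Ioc (β*((n:ℝ)+1)) 1,
        volume (Sl n β u) = ENNReal.ofReal (u^n) * ENNReal.ofReal (1 - (β/u)*(n:ℝ)) := by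
      intro u hu
      have hu0 : (0:ℝ) < u := lt_of_le_of_lt (by positivity) hu.1
      have hdiv : (β/u) * (n:ℝ) ≤ 1 := by
        rw [div_mul_eq_mul_div, div_le_one hu0]
        refine le_trans ?_ (le_of_lt hu.1)
        nlinarith
      rw [vol_slice n β u hβ hu.1, IH (β/u) (div_nonneg hβ (le_of_lt hu0)) hdiv]
    rw [setLIntegral_congr_fun measurableSet_Ioc hslice]
    rw [lintegral_step n β hβ hβk']
    rw [show ((n+1 : ℕ) : ENNReal) = ENNReal.ofReal ((n:ℝ)+1) by
      rw [← ENNReal.ofReal_natCast (n+1)]; congr 1]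
    rw [← ENNReal.ofReal_mul (by positivity)]
    congr 1
    rw [mul_div_cancel₀ _ (by positivity : ((n:ℝ)+1) ≠ 0)]
    rw [hcast]

/-- order statistic / counting equivalence via `Tuple.sort` -/
lemma sort_iff {k : ℕ} (hk : 0 < k) (x : Fin k → ℝ) (α : ℝ) (j : Fin k) :
    ((k:ℝ)/((j:ℕ)+1)) * x (Tuple.sort x j) ≤ α ↔ (j:ℕ) < cnt x ((α/k)*((j:ℕ)+1)) := by
  have h1 : (0:ℝ) < (j:ℕ)+1 := by positivity
  have hk' : (0:ℝ) < k := by exact_mod_cast hk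
  have hiff := Tuple.lt_card_le_iff_apply_le_of_monotone (f := x ∘ Tuple.sort x)
    (a := (α/k)*((j:ℕ)+1)) (j := j) (Tuple.monotone_sort x)
  have hcard : Fintype.card {i // (x ∘ Tuple.sort x) i ≤ (α/k)*((j:ℕ)+1)}
      = cnt x ((α/k)*((j:ℕ)+1)) := by
    rw [cnt_eq_card]
    exact Fintype.card_congr ((Tuple.sort x).subtypeEquiv fun i => Iff.rfl)
  rw [← Fintype.card_subtype] at hiff
  rw [hcard] at hiff
  have hiff' : ((j:ℕ) < cnt x ((α/k)*((j:ℕ)+1))) ↔ x (Tuple.sort x j) ≤ (α/k)*((j:ℕ)+1) := hiff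
  rw [hiff']
  rw [div_mul_eq_mul_div, div_le_iff₀ h1, div_mul_eq_mul_div, le_div_iff₀ hk',
    mul_comm ((k:ℝ)) (x (Tuple.sort x j))]

/-- joint law is the product of uniforms -/
lemma map_eq_pi {Ω : Type*} [MeasurableSpace Ω] (μ : Measure Ω) [IsProbabilityMeasure μ]
    (k : ℕ) (p : Fin k → Ω → ℝ) (hmeas : ∀ i, Measurable (p i))
    (hindep : ProbabilityTheory.iIndepFun p μ)
    (hunif : ∀ i, Measure.map (p i) μ = volume.restrict (Set.Icc (0 : ℝ) 1)) :
    Measure.map (fun ω i => p i ω) μ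
      = Measure.pi (fun _ : Fin k => volume.restrict (Set.Icc (0:ℝ) 1)) := by
  have hP : Measurable (fun ω i => p i ω) := measurable_pi_lambda _ hmeas
  refine (Measure.pi_eq fun s hs => ?_).symm
  rw [Measure.map_apply hP (MeasurableSet.univ_pi hs)]
  have hpre : (fun ω i => p i ω) ⁻¹' (Set.pi Set.univ s) = ⋂ i ∈ Finset.univ, p i ⁻¹' s i := by
    ext ω; simp [Set.mem_univ_pi]
  rw [hpre, hindep.measure_inter_preimage_eq_mul Finset.univ (fun i _ => hs i)]
  refine Finset.prod_congr rfl fun i _ => ?_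
  rw [← Measure.map_apply (hmeas i) (hs i), hunif i]

lemma pi_restrict (k : ℕ) :
    Measure.pi (fun _ : Fin k => volume.restrict (Set.Icc (0:ℝ) 1))
      = (volume : Measure (Fin k → ℝ)).restrict (Set.pi Set.univ fun _ => Set.Icc (0:ℝ) 1) := by
  rw [MeasureTheory.volume_pi]
  refine Measure.pi_eq fun s hs => ?_
  rw [Measure.restrict_apply (MeasurableSet.univ_pi hs), ← Set.pi_inter_distrib,
    Measure.pi_pi]
  exact Finset.prod_congr rfl fun i _ => (Measure.restrict_apply (hs i)).symm

end SimesAux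

open SimesAux

/-- Simes (1986): if `p 1, …, p k` are independent Uniform[0,1] p-values, then the
Simes statistic `S = min_j (k/j)·p_{(j)}` is exactly uniform:
`ℙ(S ≤ α) = α` for all `α ∈ [0,1]`.  (`S ≤ α` is expressed as
`∃ j, (k/(j+1))·p_{(j+1)} ≤ α` where `p_{(j+1)} = p (Tuple.sort p j)` is the
`(j+1)`-st order statistic.) -/
theorem stmt3 {Ω : Type*} [MeasurableSpace Ω] (μ : Measure Ω) [IsProbabilityMeasure μ]
    (k : ℕ) (hk : 0 < k) (p : Fin k → Ω → ℝ) (hmeas : ∀ i, Measurable (p i))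
    (hindep : ProbabilityTheory.iIndepFun p μ)
    (hunif : ∀ i, Measure.map (p i) μ = volume.restrict (Set.Icc (0 : ℝ) 1))
    (α : ℝ) (hα : α ∈ Set.Icc (0 : ℝ) 1) :
    μ {ω | ∃ j : Fin k,
        ((k : ℝ) / ((j : ℕ) + 1)) * (fun i => p i ω) (Tuple.sort (fun i => p i ω) j) ≤ α} =
      ENNReal.ofReal α := by
  classical
  obtain ⟨hα0, hα1⟩ := hα
  have hk0 : ((k:ℝ)) ≠ 0 := by positivity
  set B : Set (Fin k → ℝ) :=
    {x | ∃ j : Fin k, (j:ℕ) < cnt x ((α/k) * ((j:ℕ)+1))} with hBdef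
  have hB : MeasurableSet B := by
    rw [hBdef, Set.setOf_exists]
    exact MeasurableSet.iUnion fun j => (measurable_cnt _) (measurableSet_Ioi (α := ℕ))
  have hP : Measurable (fun ω (i : Fin k) => p i ω) := measurable_pi_lambda _ hmeas
  have hev : {ω | ∃ j : Fin k,
      ((k : ℝ) / ((j : ℕ) + 1)) * (fun i => p i ω) (Tuple.sort (fun i => p i ω) j) ≤ α}
      = (fun ω (i : Fin k) => p i ω) ⁻¹' B := by
    ext ω
    simp only [Set.mem_setOf_eq, Set.mem_preimage, hBdef]
    exact exists_congr fun j => sort_iff hk (fun i => p i ω) α j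
  rw [hev, ← Measure.map_apply hP hB, map_eq_pi μ k p hmeas hindep hunif]
  set π : Measure (Fin k → ℝ) := Measure.pi (fun _ : Fin k => volume.restrict (Set.Icc (0:ℝ) 1))
    with hπ
  haveI : IsProbabilityMeasure (volume.restrict (Set.Icc (0:ℝ) 1)) := by
    constructor
    rw [Measure.restrict_apply_univ, Real.volume_Icc]
    norm_num
  haveI : IsProbabilityMeasure π := by rw [hπ]; infer_instance
  have hBc : π Bᶜ = ENNReal.ofReal (1-α) := by
    have hcompl : Bᶜ ∩ (Set.pi Set.univ fun _ : Fin k => Set.Icc (0:ℝ) 1) = G k (α/k) := by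
      ext x
      simp only [Set.mem_inter_iff, Set.mem_compl_iff, hBdef, Set.mem_setOf_eq, not_exists,
        Set.mem_univ_pi, G, not_lt]
      tauto
    rw [hπ, pi_restrict k, Measure.restrict_apply hB.compl, hcompl,
      volG k (α/k) (div_nonneg hα0 (by positivity)) (by rw [div_mul_cancel₀ _ hk0]; exact hα1),
      div_mul_cancel₀ _ hk0]
  have hsum : ENNReal.ofReal α + ENNReal.ofReal (1-α) = 1 := by
    rw [← ENNReal.ofReal_add hα0 (by linarith)]
    norm_num
  have hmc := measure_compl hB (measure_ne_top π B)
  rw [measure_univ, hBc] at hmc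
  have hπB : π B = 1 - ENNReal.ofReal (1-α) := by
    rw [hmc, ENNReal.sub_sub_cancel ENNReal.one_ne_top prob_le_one]
  rw [hπB, ← hsum, ENNReal.add_sub_cancel_right ENNReal.ofReal_ne_top]
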